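/- arXiv:2405.13840 — 3 statements merged into one kernel-verified Lean document; each statement's English description precedes it below -/
import Mathlib

section
/- Under the same hypotheses (∑_{i=1}^∞ ‖[F_k^i(y)]^{-1}‖₂ ≤ σ uniformly over points y on the orbit, and ‖∂f_k/∂k‖₂ ≤ M), for every n ≥ 1 one has ‖F_k^n(x)·L(x,k) − ∂f_k^n/∂k(x)‖₂ ≤ M·σ, where L(x,k) = ∑_{i=1}^∞ [F_k^i(x)]^{-1} ∂f_k/∂k(f_k^{i−1}(x)). -/
/-- The operator norm on real matrices induced by the Euclidean (ℓ²) norm. -/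
noncomputable def opNorm {n : Type*} [Fintype n] [DecidableEq n]
    (P : Matrix n n ℝ) : ℝ :=
  ‖(Matrix.toEuclideanCLM (𝕜 := ℝ) P : EuclideanSpace ℝ n →L[ℝ] EuclideanSpace ℝ n)‖

/-- The Euclidean norm of a vector. -/
noncomputable def vnorm {n : Type*} [Fintype n] (v : n → ℝ) : ℝ :=
  Real.sqrt (∑ i, v i ^ 2)

/-- The two-parameter Jacobian cocycle: `twoCoc G m i = F_k^i(f_k^m(x))`, the product of the
one-step Jacobians `G j = F_k(f_k^j(x))` over times `m, …, m+i-1`, latest on the left. -/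
def twoCoc {d : ℕ} (G : ℕ → Matrix (Fin d) (Fin d) ℝ) : ℕ → ℕ → Matrix (Fin d) (Fin d) ℝ
  | _, 0 => 1
  | m, (i + 1) => G (m + i) * twoCoc G m i

lemma vnorm_eq {d : ℕ} (v : Fin d → ℝ) :
    vnorm v = ‖(WithLp.equiv 2 (Fin d → ℝ)).symm v‖ := by
  rw [EuclideanSpace.norm_eq]
  simp [vnorm, Real.norm_eq_abs, sq_abs]

lemma twoCoc_add {d : ℕ} (G : ℕ → Matrix (Fin d) (Fin d) ℝ) (m a b : ℕ) :
    twoCoc G m (a + b) = twoCoc G (m + a) b * twoCoc G m a := by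
  induction b with
  | zero => simp [twoCoc]
  | succ b ih =>
      show twoCoc G m ((a + b) + 1) = _
      rw [twoCoc, ih]
      show _ = (G (m + a + b) * twoCoc G (m + a) b) * twoCoc G m a
      rw [Matrix.mul_assoc, Nat.add_assoc]

/-- If `∑_{i=1}^∞ ‖[F_k^i(y)]⁻¹‖₂ ≤ σ` uniformly over points `y` of the orbit, and
`‖∂f_k/∂k‖₂ ≤ M` along the orbit, then for every `n ≥ 1`,
`‖F_k^n(x) L(x,k) − ∂f_k^n/∂k(x)‖₂ ≤ M σ`, where
`L(x,k) = ∑_{i=1}^∞ [F_k^i(x)]⁻¹ ∂f_k/∂k(f_k^{i-1}(x))`. -/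
theorem tail_bound_L {d : ℕ} (σ M : ℝ)
    (G : ℕ → Matrix (Fin d) (Fin d) ℝ) (u : ℕ → Fin d → ℝ) (w : ℕ → Fin d → ℝ)
    (hw0 : w 0 = 0) (hwrec : ∀ n, w (n + 1) = (G n).mulVec (w n) + u n)
    (hinv : ∀ m i : ℕ, IsUnit (twoCoc G m i))
    (hσ : ∀ m mm : ℕ, ∑ i ∈ Finset.range mm, opNorm ((twoCoc G m (i + 1))⁻¹) ≤ σ)
    (hM : ∀ i : ℕ, vnorm (u i) ≤ M) :
    ∀ n : ℕ, 1 ≤ n →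
      vnorm ((twoCoc G 0 n).mulVec
          (∑' i : ℕ, ((twoCoc G 0 (i + 1))⁻¹).mulVec (u i)) - w n) ≤ M * σ := by
  classical
  have hM0 : 0 ≤ M := le_trans (Real.sqrt_nonneg _) (hM 0)
  set E := EuclideanSpace ℝ (Fin d)
  let ψ : E ≃L[ℝ] (Fin d → ℝ) := PiLp.continuousLinearEquiv 2 ℝ (fun _ : Fin d => ℝ)
  have hψ : ∀ v : Fin d → ℝ, ψ.symm v = (WithLp.equiv 2 (Fin d → ℝ)).symm v := fun _ => rfl
  let T : Matrix (Fin d) (Fin d) ℝ → (E →L[ℝ] E) := fun P => Matrix.toEuclideanCLM (𝕜 := ℝ) P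
  have hT : ∀ (P : Matrix (Fin d) (Fin d) ℝ) (v : Fin d → ℝ),
      T P (ψ.symm v) = ψ.symm (P.mulVec v) := by
    intro P v
    rw [hψ, hψ]
    exact Matrix.toEuclideanCLM_toLp P v
  have hTmul : ∀ (P Q : Matrix (Fin d) (Fin d) ℝ) (x : E),
      T (P * Q) x = T P (T Q x) := by
    intro P Q x
    show Matrix.toEuclideanCLM (𝕜 := ℝ) (P * Q) x = _
    rw [map_mul]; rfl
  have hdet : ∀ m i, IsUnit (twoCoc G m i).det :=
    fun m i => (Matrix.isUnit_iff_isUnit_det _).mp (hinv m i)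
  have hcancel : ∀ (m i : ℕ) (x : E), T (twoCoc G m i) (T ((twoCoc G m i)⁻¹) x) = x := by
    intro m i x
    rw [← hTmul, Matrix.mul_nonsing_inv _ (hdet m i)]
    show Matrix.toEuclideanCLM (𝕜 := ℝ) 1 x = x
    rw [map_one]; rfl
  -- the summands in Euclidean space
  let g : ℕ → E := fun i => ψ.symm (((twoCoc G 0 (i + 1))⁻¹).mulVec (u i))
  have hg_eq : ∀ i, g i = T ((twoCoc G 0 (i + 1))⁻¹) (ψ.symm (u i)) := fun i => (hT _ _).symm
  have hu_norm : ∀ i, ‖(ψ.symm (u i) : E)‖ ≤ M := by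
    intro i; rw [hψ, ← vnorm_eq]; exact hM i
  have hnormT : ∀ (P : Matrix (Fin d) (Fin d) ℝ) (x : E), ‖T P x‖ ≤ opNorm P * ‖x‖ :=
    fun P x => (Matrix.toEuclideanCLM (𝕜 := ℝ) P).le_opNorm x
  have hop_nonneg : ∀ P : Matrix (Fin d) (Fin d) ℝ, 0 ≤ opNorm P := fun P => norm_nonneg _
  have hbound : ∀ m j (x : E), ‖x‖ ≤ M → ‖T ((twoCoc G m (j+1))⁻¹) x‖ ≤
      opNorm ((twoCoc G m (j+1))⁻¹) * M := by
    intro m j x hx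
    refine le_trans (hnormT _ _) ?_
    exact mul_le_mul_of_nonneg_left hx (hop_nonneg _)
  have ha : ∀ m, Summable (fun i => opNorm ((twoCoc G m (i + 1))⁻¹)) := by
    intro m
    exact summable_of_sum_range_le (fun i => hop_nonneg _) (fun mm => hσ m mm)
  have hg_norm : ∀ i, ‖g i‖ ≤ opNorm ((twoCoc G 0 (i + 1))⁻¹) * M := by
    intro i; rw [hg_eq]; exact hbound 0 i _ (hu_norm i)
  have hgsum : Summable g :=
    Summable.of_norm_bounded ((ha 0).mul_right M) hg_norm
  -- the tsum in the statement corresponds to ∑' g under ψ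
  have hfsum : Summable (fun i => ((twoCoc G 0 (i + 1))⁻¹).mulVec (u i)) := by
    have := hgsum.map (ψ : E →L[ℝ] (Fin d → ℝ)) ψ.continuous
    exact this
  have hL : ψ.symm (∑' i, ((twoCoc G 0 (i + 1))⁻¹).mulVec (u i)) = ∑' i, g i := by
    exact (ψ.symm : (Fin d → ℝ) →L[ℝ] E).map_tsum hfsum
  -- partial sums give w n
  have hw : ∀ n : ℕ, T (twoCoc G 0 n) (∑ i ∈ Finset.range n, g i) = ψ.symm (w n) := by
    intro n
    induction n with
    | zero => simp [hw0, twoCoc, map_zero]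
    | succ n ih =>
        have hstep : twoCoc G 0 (n + 1) = G n * twoCoc G 0 n := by
          show G (0 + n) * twoCoc G 0 n = _
          rw [Nat.zero_add]
        rw [Finset.sum_range_succ, map_add, hstep, hTmul, ih, hT, hg_eq,
          ← hstep, hcancel 0 (n+1), hwrec n]
        exact (map_add (ψ.symm.toContinuousLinearMap) _ _).symm
  intro n _
  rw [vnorm_eq, ← hψ, map_sub, ← hT, hL]
  -- split off the first n terms
  have htail : Summable fun j => g (j + n) := (summable_nat_add_iff n).mpr hgsum
  have hsplit : (∑' i, g i) = (∑ i ∈ Finset.range n, g i) + ∑' j, g (j + n) :=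
    (Summable.sum_add_tsum_nat_add n hgsum).symm
  rw [hsplit, map_add, hw n, add_sub_cancel_left]
  -- identify the tail terms
  have hterm : ∀ j, T (twoCoc G 0 n) (g (j + n)) =
      T ((twoCoc G n (j + 1))⁻¹) (ψ.symm (u (j + n))) := by
    intro j
    rw [hg_eq]
    have hco : twoCoc G 0 (j + n + 1) = twoCoc G n (j + 1) * twoCoc G 0 n := by
      have h2 := twoCoc_add G 0 n (j + 1)
      rw [Nat.zero_add] at h2
      have h3 : n + (j + 1) = j + n + 1 := by omega
      rw [h3] at h2
      exact h2
    rw [hco, Matrix.mul_inv_rev, hTmul, hcancel 0 n]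
  rw [(T (twoCoc G 0 n)).map_tsum htail, tsum_congr hterm]
  -- bound the norm of the tail
  have hbsum : Summable (fun j => opNorm ((twoCoc G n (j + 1))⁻¹)) := ha n
  have hfinal : ‖∑' j, T ((twoCoc G n (j + 1))⁻¹) (ψ.symm (u (j + n)))‖ ≤
      (∑' j, opNorm ((twoCoc G n (j + 1))⁻¹)) * M := by
    refine tsum_of_norm_bounded (hbsum.hasSum.mul_right M) ?_
    intro j
    exact hbound n j _ (hu_norm _)
  refine le_trans hfinal ?_
  rw [mul_comm]
  refine mul_le_mul_of_nonneg_left ?_ hM0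
  exact Summable.tsum_le_of_sum_range_le hbsum (fun mm => hσ n mm)
end

section
/- (Theorem C_d) Let f_k satisfy: ‖∂f_k/∂k(y)‖₂ ≤ M for all y, and S_k(x) := ∑_{i=1}^∞ ‖[F_k^i(x)]^{-1}‖₂ ≤ σ_k for every point x whose orbit has invertible Jacobian cocycle. Then for every such x and every N ≥ 1, the largest eigenvalue λ̃_N^{(d+1)}(x,k) of the covariance matrix Γ̃_N(x,k) = C̃_N(x,k)^{-1} satisfies λ̃_N^{(d+1)}(x,k) ≥ 1/((Mσ_k)²(N+1)). -/
open Matrix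

/-- The Jacobian cocycle `F_k^n(y)` of `f = f_k` at the point `y`: the product of the
one-step Jacobians `F = F_k` along the orbit of `y`, latest on the left. -/
def jacCoc {d : ℕ} (F : (Fin d → ℝ) → Matrix (Fin d) (Fin d) ℝ)
    (f : (Fin d → ℝ) → (Fin d → ℝ)) (y : Fin d → ℝ) : ℕ → Matrix (Fin d) (Fin d) ℝ
  | 0 => 1
  | (n + 1) => F (f^[n] y) * jacCoc F f y n

/-- The derivative `∂f_k^n/∂k(x)` defined by the recursion
`∂f_k^{n+1}/∂k(x) = F_k(f_k^n(x)) ∂f_k^n/∂k(x) + ∂f_k/∂k(f_k^n(x))`. -/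
def parDer {d : ℕ} (F : (Fin d → ℝ) → Matrix (Fin d) (Fin d) ℝ)
    (f : (Fin d → ℝ) → (Fin d → ℝ)) (w : (Fin d → ℝ) → (Fin d → ℝ))
    (x : Fin d → ℝ) : ℕ → Fin d → ℝ
  | 0 => 0
  | (n + 1) => (F (f^[n] x)).mulVec (parDer F f w x n) + w (f^[n] x)

/-- The augmented `d × (d+1)` Jacobian `F̃_k^n(x) = [F_k^n(x) | ∂f_k^n/∂k(x)]`. -/
def augment {d : ℕ} (F : Matrix (Fin d) (Fin d) ℝ) (w : Fin d → ℝ) :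
    Matrix (Fin d) (Fin d ⊕ Unit) ℝ :=
  Matrix.of fun i j => Sum.elim (fun j' => F i j') (fun _ => w i) j

/-- The normal matrix `C̃_N(x,k) = ∑_{n=0}^N F̃_k^n(x)ᵀ F̃_k^n(x)`. -/
noncomputable def normalMatrix {d : ℕ} (F : (Fin d → ℝ) → Matrix (Fin d) (Fin d) ℝ)
    (f : (Fin d → ℝ) → (Fin d → ℝ)) (w : (Fin d → ℝ) → (Fin d → ℝ))
    (x : Fin d → ℝ) (N : ℕ) : Matrix (Fin d ⊕ Unit) (Fin d ⊕ Unit) ℝ :=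
  ∑ n ∈ Finset.range (N + 1),
    (augment (jacCoc F f x n) (parDer F f w x n))ᵀ * augment (jacCoc F f x n) (parDer F f w x n)

/-! ### Auxiliary lemmas -/

lemma vnorm_eq_s9 {n : Type*} [Fintype n] (u : n → ℝ) :
    vnorm u = ‖((WithLp.equiv 2 (n → ℝ)).symm u : EuclideanSpace ℝ n)‖ := by
  rw [EuclideanSpace.norm_eq, vnorm]
  congr 1
  refine Finset.sum_congr rfl fun i _ => ?_
  simp [Real.norm_eq_abs, sq_abs]

lemma vnorm_nonneg {n : Type*} [Fintype n] (u : n → ℝ) : 0 ≤ vnorm u := Real.sqrt_nonneg _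

lemma vnorm_mulVec_le {n : Type*} [Fintype n] [DecidableEq n]
    (P : Matrix n n ℝ) (u : n → ℝ) : vnorm (P *ᵥ u) ≤ opNorm P * vnorm u := by
  rw [vnorm_eq_s9, vnorm_eq_s9, opNorm]
  have h := (Matrix.toEuclideanCLM (𝕜 := ℝ) P).le_opNorm ((WithLp.equiv 2 (n → ℝ)).symm u)
  rwa [WithLp.equiv_symm_apply, Matrix.toEuclideanCLM_toLp] at h

lemma vnorm_sum_le {n : Type*} [Fintype n] {ι : Type*} (s : Finset ι) (g : ι → n → ℝ) :
    vnorm (∑ i ∈ s, g i) ≤ ∑ i ∈ s, vnorm (g i) := by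
  simp only [vnorm_eq_s9]
  have h : ((WithLp.equiv 2 (n → ℝ)).symm (∑ i ∈ s, g i) : EuclideanSpace ℝ n)
      = ∑ i ∈ s, ((WithLp.equiv 2 (n → ℝ)).symm (g i) : EuclideanSpace ℝ n) := by
    rw [WithLp.equiv_symm_apply, WithLp.toLp_sum]
  rw [h]
  exact norm_sum_le _ _

lemma dot_self_eq {n : Type*} [Fintype n] (u : n → ℝ) : u ⬝ᵥ u = vnorm u ^ 2 := by
  rw [vnorm, Real.sq_sqrt (Finset.sum_nonneg fun i _ => sq_nonneg _)]
  simp [dotProduct, sq]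

lemma isUnit_of_mul_right' {M : Type*} [Monoid M] {a b : M}
    (hab : IsUnit (a * b)) (hb : IsUnit b) : IsUnit a := by
  have h : ((hab.unit * hb.unit⁻¹ : Mˣ) : M) = a := by
    rw [Units.val_mul, IsUnit.unit_spec, mul_assoc, IsUnit.mul_val_inv, mul_one]
  exact h ▸ (hab.unit * hb.unit⁻¹).isUnit

lemma jacCoc_add {d : ℕ} (F : (Fin d → ℝ) → Matrix (Fin d) (Fin d) ℝ)
    (f : (Fin d → ℝ) → (Fin d → ℝ)) (x : Fin d → ℝ) (n : ℕ) :
    ∀ m, jacCoc F f (f^[n] x) m * jacCoc F f x n = jacCoc F f x (n + m)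
  | 0 => by simp [jacCoc]
  | (m + 1) => by
    show (F (f^[m] (f^[n] x)) * jacCoc F f (f^[n] x) m) * jacCoc F f x n = _
    rw [mul_assoc, jacCoc_add F f x n m, ← Function.iterate_add_apply, Nat.add_comm m n]
    rfl

lemma jacCoc_shift_isUnit {d : ℕ} (F : (Fin d → ℝ) → Matrix (Fin d) (Fin d) ℝ)
    (f : (Fin d → ℝ) → (Fin d → ℝ)) (x : Fin d → ℝ)
    (hx : ∀ n, IsUnit (jacCoc F f x n)) (n m : ℕ) :
    IsUnit (jacCoc F f (f^[n] x) m) :=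
  isUnit_of_mul_right' ((jacCoc_add F f x n m) ▸ hx (n + m)) (hx n)

lemma jacCoc_mul_inv_add {d : ℕ} (F : (Fin d → ℝ) → Matrix (Fin d) (Fin d) ℝ)
    (f : (Fin d → ℝ) → (Fin d → ℝ)) (x : Fin d → ℝ)
    (hx : ∀ n, IsUnit (jacCoc F f x n)) (n m : ℕ) :
    jacCoc F f x n * (jacCoc F f x (n + m))⁻¹ = (jacCoc F f (f^[n] x) m)⁻¹ := by
  rw [← jacCoc_add F f x n m, Matrix.mul_inv_rev, ← mul_assoc,
    Matrix.mul_nonsing_inv _ ((Matrix.isUnit_iff_isUnit_det _).1 (hx n)), one_mul]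

lemma parDer_eq {d : ℕ} (F : (Fin d → ℝ) → Matrix (Fin d) (Fin d) ℝ)
    (f : (Fin d → ℝ) → (Fin d → ℝ)) (w : (Fin d → ℝ) → (Fin d → ℝ)) (x : Fin d → ℝ)
    (hx : ∀ n, IsUnit (jacCoc F f x n)) (n : ℕ) :
    parDer F f w x n = (jacCoc F f x n) *ᵥ
      (∑ i ∈ Finset.range n, ((jacCoc F f x (i + 1))⁻¹ *ᵥ w (f^[i] x))) := by
  induction n with
  | zero => simp [parDer]
  | succ n ih =>
    show (F (f^[n] x)) *ᵥ parDer F f w x n + w (f^[n] x) = _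
    have hj : jacCoc F f x (n + 1) = F (f^[n] x) * jacCoc F f x n := rfl
    rw [ih, Finset.sum_range_succ, Matrix.mulVec_add, Matrix.mulVec_mulVec, ← hj,
      Matrix.mulVec_mulVec, Matrix.mul_nonsing_inv _
        ((Matrix.isUnit_iff_isUnit_det _).1 (hx (n + 1))), Matrix.one_mulVec]

lemma augment_mulVec {d : ℕ} (A : Matrix (Fin d) (Fin d) ℝ) (u : Fin d → ℝ) (L : Fin d → ℝ) :
    (augment A u) *ᵥ (Sum.elim L fun _ => (-1 : ℝ)) = A *ᵥ L - u := by
  funext i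
  simp [augment, Matrix.mulVec, dotProduct, Fintype.sum_sum_type, sub_eq_add_neg]

lemma key_bound {d : ℕ} (M σ : ℝ) (hM0 : 0 ≤ M)
    (F : (Fin d → ℝ) → Matrix (Fin d) (Fin d) ℝ)
    (f : (Fin d → ℝ) → (Fin d → ℝ)) (w : (Fin d → ℝ) → (Fin d → ℝ))
    (hM : ∀ y, vnorm (w y) ≤ M)
    (hσ : ∀ y : Fin d → ℝ, (∀ n, IsUnit (jacCoc F f y n)) →
      ∀ m : ℕ, ∑ i ∈ Finset.range m, opNorm ((jacCoc F f y (i + 1))⁻¹) ≤ σ)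
    (x : Fin d → ℝ) (hx : ∀ n, IsUnit (jacCoc F f x n))
    (N n : ℕ) (hn : n ≤ N) :
    vnorm ((augment (jacCoc F f x n) (parDer F f w x n)) *ᵥ
      (Sum.elim (∑ i ∈ Finset.range N, ((jacCoc F f x (i + 1))⁻¹ *ᵥ w (f^[i] x)))
        fun _ => (-1 : ℝ))) ≤ M * σ := by
  rw [augment_mulVec, parDer_eq F f w x hx n, ← Matrix.mulVec_sub]
  have hsub : (∑ i ∈ Finset.range N, ((jacCoc F f x (i + 1))⁻¹ *ᵥ w (f^[i] x)))
      - (∑ i ∈ Finset.range n, ((jacCoc F f x (i + 1))⁻¹ *ᵥ w (f^[i] x)))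
      = ∑ i ∈ Finset.Ico n N, ((jacCoc F f x (i + 1))⁻¹ *ᵥ w (f^[i] x)) := by
    rw [Finset.sum_Ico_eq_sub _ hn]
  rw [hsub, Finset.sum_Ico_eq_sum_range]
  have hstep : ∀ j, (jacCoc F f x n) *ᵥ ((jacCoc F f x (n + j + 1))⁻¹ *ᵥ w (f^[n + j] x))
      = (jacCoc F f (f^[n] x) (j + 1))⁻¹ *ᵥ w (f^[n + j] x) := by
    intro j
    rw [Matrix.mulVec_mulVec]
    have h := jacCoc_mul_inv_add F f x hx n (j + 1)
    rw [← Nat.add_assoc] at h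
    rw [h]
  have hrw : (jacCoc F f x n) *ᵥ (∑ j ∈ Finset.range (N - n),
        ((jacCoc F f x (n + j + 1))⁻¹ *ᵥ w (f^[n + j] x)))
      = ∑ j ∈ Finset.range (N - n), ((jacCoc F f (f^[n] x) (j + 1))⁻¹ *ᵥ w (f^[n + j] x)) := by
    rw [← Matrix.mulVecLin_apply, map_sum]
    exact Finset.sum_congr rfl fun j _ => by rw [Matrix.mulVecLin_apply, hstep j]
  rw [hrw]
  calc vnorm (∑ j ∈ Finset.range (N - n), ((jacCoc F f (f^[n] x) (j + 1))⁻¹ *ᵥ w (f^[n + j] x)))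
      ≤ ∑ j ∈ Finset.range (N - n), vnorm ((jacCoc F f (f^[n] x) (j + 1))⁻¹ *ᵥ w (f^[n + j] x)) :=
        vnorm_sum_le _ _
    _ ≤ ∑ j ∈ Finset.range (N - n), opNorm ((jacCoc F f (f^[n] x) (j + 1))⁻¹) * M := by
        refine Finset.sum_le_sum fun j _ => ?_
        exact le_trans (vnorm_mulVec_le _ _)
          (mul_le_mul_of_nonneg_left (hM _) (norm_nonneg _))
    _ = (∑ j ∈ Finset.range (N - n), opNorm ((jacCoc F f (f^[n] x) (j + 1))⁻¹)) * M := by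
        rw [Finset.sum_mul]
    _ ≤ σ * M := mul_le_mul_of_nonneg_right
        (hσ (f^[n] x) (jacCoc_shift_isUnit F f x hx n) (N - n)) hM0
    _ = M * σ := mul_comm _ _

lemma rayleigh_min {K : Type*} [Fintype K] [DecidableEq K] {C : Matrix K K ℝ}
    (hH : C.IsHermitian) {i0 : K} (hmin : ∀ i, hH.eigenvalues i0 ≤ hH.eigenvalues i)
    (v : K → ℝ) : hH.eigenvalues i0 * (v ⬝ᵥ v) ≤ v ⬝ᵥ (C *ᵥ v) := by
  set U : Matrix K K ℝ := (hH.eigenvectorUnitary : Matrix K K ℝ) with hU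
  have hstar : star U = Uᵀ := by
    rw [Matrix.star_eq_conjTranspose, Matrix.conjTranspose_eq_transpose_of_trivial]
  have hUU : U * Uᵀ = 1 := by
    rw [← hstar]; exact (Matrix.mem_unitaryGroup_iff).mp hH.eigenvectorUnitary.2
  set y : K → ℝ := Uᵀ *ᵥ v with hy
  have h2 : y ⬝ᵥ y = v ⬝ᵥ v := by
    conv_lhs => rw [hy, Matrix.dotProduct_mulVec, Matrix.vecMul_transpose,
      Matrix.mulVec_mulVec, hUU, Matrix.one_mulVec]
  have h1 : v ⬝ᵥ (C *ᵥ v) = ∑ i, hH.eigenvalues i * (y i * y i) := by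
    conv_lhs => rw [hH.spectral_theorem, Unitary.conjStarAlgAut_apply, hstar, ← Matrix.mulVec_mulVec,
      ← Matrix.mulVec_mulVec, Matrix.dotProduct_mulVec, ← Matrix.mulVec_transpose]
    rw [← hy, dotProduct]
    refine Finset.sum_congr rfl fun i _ => ?_
    rw [Matrix.mulVec_diagonal]
    simp only [Function.comp_apply, RCLike.ofReal_real_eq_id, id_eq]
    ring
  rw [h1, ← h2, dotProduct, Finset.mul_sum]
  exact Finset.sum_le_sum fun i _ =>
    mul_le_mul_of_nonneg_right (hmin i) (mul_self_nonneg _)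

lemma sum_mulVec' {ι K n : Type*} [Fintype n] (s : Finset ι)
    (A : ι → Matrix K n ℝ) (v : n → ℝ) :
    (∑ i ∈ s, A i) *ᵥ v = ∑ i ∈ s, (A i *ᵥ v) := by
  induction s using Finset.cons_induction with
  | empty => simp
  | cons i s hi ih => simp [Finset.sum_cons, Matrix.add_mulVec, ih]

lemma dotProduct_sum' {ι n : Type*} [Fintype n] (s : Finset ι)
    (v : n → ℝ) (g : ι → n → ℝ) :
    v ⬝ᵥ (∑ i ∈ s, g i) = ∑ i ∈ s, v ⬝ᵥ g i := by
  induction s using Finset.cons_induction with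
  | empty => simp
  | cons i s hi ih => simp [Finset.sum_cons, dotProduct_add, ih]

/-- **Theorem C_d.** Suppose `‖∂f_k/∂k(y)‖₂ ≤ M` for all `y`, and
`S_k(y) = ∑_{i=1}^∞ ‖[F_k^i(y)]⁻¹‖₂ ≤ σ` for every point `y` whose Jacobian cocycle is
invertible. Then for every such `x` and every `N ≥ 1`, the largest eigenvalue of the
covariance matrix `Γ̃_N(x,k) = C̃_N(x,k)⁻¹` is at least `1/((Mσ)² (N+1))`. -/
theorem theorem_Cd {d : ℕ} (M σ : ℝ) (hM0 : 0 < M) (hσ0 : 0 < σ)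
    (F : (Fin d → ℝ) → Matrix (Fin d) (Fin d) ℝ)
    (f : (Fin d → ℝ) → (Fin d → ℝ)) (w : (Fin d → ℝ) → (Fin d → ℝ))
    (hM : ∀ y, vnorm (w y) ≤ M)
    (hσ : ∀ y : Fin d → ℝ, (∀ n, IsUnit (jacCoc F f y n)) →
      ∀ m : ℕ, ∑ i ∈ Finset.range m, opNorm ((jacCoc F f y (i + 1))⁻¹) ≤ σ)
    (x : Fin d → ℝ) (hx : ∀ n, IsUnit (jacCoc F f x n))
    (N : ℕ) (hN : 1 ≤ N)
    (hpos : (normalMatrix F f w x N).PosDef) :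
    ∃ μ : ℝ, Module.End.HasEigenvalue (Matrix.toLin' (normalMatrix F f w x N)⁻¹) μ ∧
      1 / ((M * σ) ^ 2 * (N + 1)) ≤ μ := by
  classical
  set C := normalMatrix F f w x N with hCdef
  have hH : C.IsHermitian := hpos.1
  obtain ⟨i0, -, hmin⟩ := Finset.exists_min_image Finset.univ hH.eigenvalues
    ⟨Sum.inr (), Finset.mem_univ _⟩
  have hmin' : ∀ i, hH.eigenvalues i0 ≤ hH.eigenvalues i := fun i => hmin i (Finset.mem_univ i)
  set lam := hH.eigenvalues i0 with hlamdef
  have hlam : 0 < lam := hpos.eigenvalues_pos i0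
  -- the test vector
  set v : (Fin d ⊕ Unit) → ℝ :=
    Sum.elim (∑ i ∈ Finset.range N, ((jacCoc F f x (i + 1))⁻¹ *ᵥ w (f^[i] x)))
      (fun _ => (-1 : ℝ)) with hv
  have hvv : 1 ≤ v ⬝ᵥ v := by
    have h1 : v (Sum.inr ()) * v (Sum.inr ()) = 1 := by simp [hv]
    calc (1 : ℝ) = v (Sum.inr ()) * v (Sum.inr ()) := h1.symm
      _ ≤ ∑ j, v j * v j :=
          Finset.single_le_sum (fun j _ => mul_self_nonneg (v j)) (Finset.mem_univ _)
      _ = v ⬝ᵥ v := rfl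
  have hCv : v ⬝ᵥ (C *ᵥ v) ≤ (M * σ) ^ 2 * (N + 1) := by
    rw [hCdef, normalMatrix, sum_mulVec', dotProduct_sum']
    have hterm : ∀ n ∈ Finset.range (N + 1),
        v ⬝ᵥ (((augment (jacCoc F f x n) (parDer F f w x n))ᵀ
          * augment (jacCoc F f x n) (parDer F f w x n)) *ᵥ v) ≤ (M * σ) ^ 2 := by
      intro n hn
      rw [← Matrix.mulVec_mulVec, Matrix.dotProduct_mulVec, Matrix.vecMul_transpose,
        dot_self_eq]
      have hb := key_bound M σ hM0.le F f w hM hσ x hx N n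
        (Nat.lt_succ_iff.mp (Finset.mem_range.mp hn))
      exact pow_le_pow_left₀ (vnorm_nonneg _) hb 2
    calc ∑ n ∈ Finset.range (N + 1), v ⬝ᵥ (((augment (jacCoc F f x n) (parDer F f w x n))ᵀ
          * augment (jacCoc F f x n) (parDer F f w x n)) *ᵥ v)
        ≤ ∑ _n ∈ Finset.range (N + 1), (M * σ) ^ 2 := Finset.sum_le_sum hterm
      _ = (M * σ) ^ 2 * (N + 1) := by
          rw [Finset.sum_const, Finset.card_range, nsmul_eq_mul, mul_comm]
          push_cast
          ring
  have hbpos : 0 < (M * σ) ^ 2 * (N + 1) := by positivity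
  have hlamle : lam ≤ (M * σ) ^ 2 * (N + 1) :=
    calc lam ≤ lam * (v ⬝ᵥ v) := le_mul_of_one_le_right hlam.le hvv
      _ ≤ v ⬝ᵥ (C *ᵥ v) := rayleigh_min hH hmin' v
      _ ≤ (M * σ) ^ 2 * (N + 1) := hCv
  -- eigenvector of `C⁻¹`
  have hCu : C *ᵥ ⇑(hH.eigenvectorBasis i0) = lam • ⇑(hH.eigenvectorBasis i0) :=
    hH.mulVec_eigenvectorBasis i0
  have hu0 : ⇑(hH.eigenvectorBasis i0) ≠ 0 := by
    have h := hH.eigenvectorBasis.orthonormal.ne_zero i0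
    intro hc
    exact h (by ext i; exact congrFun hc i)
  have hdet : IsUnit C.det := (Matrix.isUnit_iff_isUnit_det C).1 hpos.isUnit
  have hinv : C⁻¹ *ᵥ ⇑(hH.eigenvectorBasis i0) = lam⁻¹ • ⇑(hH.eigenvectorBasis i0) := by
    have h1 : C⁻¹ *ᵥ (C *ᵥ ⇑(hH.eigenvectorBasis i0)) = ⇑(hH.eigenvectorBasis i0) := by
      rw [Matrix.mulVec_mulVec, Matrix.nonsing_inv_mul _ hdet, Matrix.one_mulVec]
    rw [hCu, Matrix.mulVec_smul] at h1
    calc C⁻¹ *ᵥ ⇑(hH.eigenvectorBasis i0)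
        = lam⁻¹ • (lam • (C⁻¹ *ᵥ ⇑(hH.eigenvectorBasis i0))) := by
          rw [smul_smul, inv_mul_cancel₀ hlam.ne', one_smul]
      _ = lam⁻¹ • ⇑(hH.eigenvectorBasis i0) := by rw [h1]
  refine ⟨lam⁻¹, ?_, ?_⟩
  · exact Module.End.hasEigenvalue_of_hasEigenvector
      ⟨Module.End.mem_eigenspace_iff.2 (by rw [Matrix.toLin'_apply, hinv]), hu0⟩
  · rw [one_div]
    exact inv_anti₀ hlam hlamle
end

section
/- Let f : [0,1] → [0,1], x̄ a fixed point of f, and I an interval adjacent to x̄ with I ⊆ f(I), f|_I invertible, and 1 < |f'(y)| ≤ 1 + ε for all y ∈ I, where ε > 0. Then for any r < ε^{-1} there exist n_r ∈ ℕ and a point z (an (n_r − 1)-fold preimage under f|_I of a point of I) such that ∑_{i=1}^{n_r} |(f^i)'(z)|^{-1} ≥ ∑_{i=1}^{n_r} (1+ε)^{-i} > r; in particular S(z) = ∑_{i=1}^∞ |(f^i)'(z)|^{-1} > r, so S is unbounded on [0,1]. -/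
/-- Failure of condition `C₁` near an indifferent fixed point: let `x̄` be a fixed point of
`f : [0,1] → [0,1]` and `I` a nonempty interval adjacent to `x̄` with `I ⊆ f(I)`, `f`
injective on `I`, and `1 < |f'(y)| ≤ 1 + ε` on `I`. Then for any `r < ε⁻¹` there exist
`n_r` and a point `z` whose orbit stays in `I` for the first `n_r` steps (an `(n_r−1)`-fold
preimage under `f|_I` of a point of `I`) with
`∑_{i=1}^{n_r} |(fⁱ)'(z)|⁻¹ ≥ ∑_{i=1}^{n_r} (1+ε)^{-i} > r`; in particular
`S(z) = ∑_{i=1}^∞ |(fⁱ)'(z)|⁻¹ > r`, so `S` is unbounded. -/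
theorem S_unbounded_near_indifferent_fixed_point
    (f : ℝ → ℝ) (f' : ℝ → ℝ) (xbar : ℝ) (I : Set ℝ) (ε r : ℝ)
    (hmap : Set.MapsTo f (Set.Icc 0 1) (Set.Icc 0 1))
    (hI : I ⊆ Set.Icc (0:ℝ) 1) (hne : I.Nonempty)
    (hfix : f xbar = xbar)
    (hsub : I ⊆ f '' I) (hinj : Set.InjOn f I)
    (hε : 0 < ε)
    (hd : ∀ y ∈ I, HasDerivAt f (f' y) y)
    (hd1 : ∀ y ∈ I, 1 < |f' y|) (hd2 : ∀ y ∈ I, |f' y| ≤ 1 + ε)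
    (hr : r < ε⁻¹) :
    ∃ (n : ℕ) (z : ℝ), 1 ≤ n ∧ (∀ j : ℕ, j < n → f^[j] z ∈ I) ∧
      r < ∑ i ∈ Finset.range n, ((1 + ε) ^ (i + 1))⁻¹ ∧
      (∑ i ∈ Finset.range n, ((1 + ε) ^ (i + 1))⁻¹
        ≤ ∑ i ∈ Finset.range n, |deriv (f^[i + 1]) z|⁻¹) ∧
      r < ∑ i ∈ Finset.range n, |deriv (f^[i + 1]) z|⁻¹ := by
  have h1ε : (0:ℝ) < 1 + ε := by linarith
  set a : ℝ := (1 + ε)⁻¹ with ha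
  have ha0 : 0 < a := inv_pos.mpr h1ε
  have ha1 : a < 1 := by
    rw [ha, inv_lt_one_iff₀]; right; linarith
  -- geometric series sums to ε⁻¹
  have hsum : HasSum (fun i : ℕ => ((1 + ε) ^ (i + 1))⁻¹) ε⁻¹ := by
    have h := (hasSum_geometric_of_lt_one ha0.le ha1).mul_left a
    have heq : a * (1 - a)⁻¹ = ε⁻¹ := by
      rw [ha]; field_simp
      rw [show (1:ℝ) + ε - 1 = ε by ring, div_self hε.ne']
    rw [heq] at h
    have hf : (fun i : ℕ => ((1 + ε) ^ (i + 1))⁻¹) = fun i : ℕ => a * a ^ i := by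
      funext i
      rw [ha, pow_succ, mul_inv, ← inv_pow, mul_comm]
    rw [hf]; exact h
  -- partial sums eventually exceed r, pick n ≥ 1
  have htend := hsum.tendsto_sum_nat
  have hev : ∀ᶠ n in Filter.atTop,
      r < ∑ i ∈ Finset.range n, ((1 + ε) ^ (i + 1))⁻¹ :=
    htend.eventually (eventually_gt_nhds hr)
  obtain ⟨n, hn1, hnr⟩ := ((Filter.eventually_ge_atTop 1).and hev).exists
  -- construct z whose orbit stays in I
  have hz : ∀ m : ℕ, ∃ z : ℝ, ∀ j : ℕ, j ≤ m → f^[j] z ∈ I := by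
    intro m
    induction m with
    | zero =>
      obtain ⟨w, hw⟩ := hne
      exact ⟨w, fun j hj => by simpa [Nat.le_zero.mp hj] using hw⟩
    | succ m ih =>
      obtain ⟨z, hz⟩ := ih
      obtain ⟨z', hz'I, hz'⟩ := hsub (hz 0 (Nat.zero_le _))
      refine ⟨z', fun j hj => ?_⟩
      cases j with
      | zero => simpa using hz'I
      | succ j =>
        rw [Function.iterate_succ_apply, hz']
        exact hz j (Nat.succ_le_succ_iff.mp hj)
  obtain ⟨z, hzI⟩ := hz (n - 1)
  have hzI' : ∀ j : ℕ, j < n → f^[j] z ∈ I := fun j hj =>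
    hzI j (Nat.le_sub_one_of_lt hj)
  -- derivative of iterates along the orbit
  have hderiv : ∀ k : ℕ, k < n →
      HasDerivAt (f^[k + 1]) (∏ j ∈ Finset.range (k + 1), f' (f^[j] z)) z := by
    intro k hk
    induction k with
    | zero =>
      simpa [Function.iterate_one] using hd z (hzI' 0 hk)
    | succ k ih =>
      have ih' := ih (Nat.lt_of_succ_lt hk)
      have hmem : f^[k + 1] z ∈ I := hzI' (k + 1) hk
      have hcomp := (hd _ hmem).comp z ih'
      have : f^[k + 1 + 1] = f ∘ f^[k + 1] := Function.iterate_succ' f (k + 1)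
      rw [this]
      rw [Finset.prod_range_succ, mul_comm]
      exact hcomp
  -- pointwise bound on each summand
  have hpt : ∀ i ∈ Finset.range n,
      ((1 + ε) ^ (i + 1))⁻¹ ≤ |deriv (f^[i + 1]) z|⁻¹ := by
    intro i hi
    rw [Finset.mem_range] at hi
    have hD := hderiv i hi
    rw [hD.deriv]
    have habs : |∏ j ∈ Finset.range (i + 1), f' (f^[j] z)|
        = ∏ j ∈ Finset.range (i + 1), |f' (f^[j] z)| := Finset.abs_prod _ _
    have hjI : ∀ j ∈ Finset.range (i + 1), f^[j] z ∈ I := fun j hj =>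
      hzI' j (lt_of_lt_of_le (Finset.mem_range.mp hj) hi)
    have hpos : 0 < |∏ j ∈ Finset.range (i + 1), f' (f^[j] z)| := by
      rw [habs]
      exact Finset.prod_pos fun j hj => lt_trans one_pos (hd1 _ (hjI j hj))
    have hle : |∏ j ∈ Finset.range (i + 1), f' (f^[j] z)| ≤ (1 + ε) ^ (i + 1) := by
      rw [habs]
      calc ∏ j ∈ Finset.range (i + 1), |f' (f^[j] z)|
          ≤ ∏ _j ∈ Finset.range (i + 1), (1 + ε) :=
            Finset.prod_le_prod (fun j hj => (abs_nonneg _))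
              (fun j hj => hd2 _ (hjI j hj))
        _ = (1 + ε) ^ (i + 1) := by rw [Finset.prod_const, Finset.card_range]
    exact inv_anti₀ hpos hle
  have hle := Finset.sum_le_sum hpt
  exact ⟨n, z, hn1, hzI', hnr, hle, lt_of_lt_of_le hnr hle⟩
end
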